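/- Let a, b, c, d : ℝ → ℝ be continuous and let z₁, z₂ : ℝ → ℂ be differentiable functions satisfying ż₁(t) = a(t)·z₁(t) + b(t)·conj(z₁(t))·z₂(t) and ż₂(t) = c(t)·z₂(t) + d(t)·z₁(t)². Define π₁(t) = |z₁(t)|², π₂(t) = |z₂(t)|², π₃(t) = Re(z₁(t)²·conj(z₂(t))). Then π₁, π₂, π₃ are differentiable and satisfy the orbit-space equations π̇₁ = 2a·π₁ + 2b·π₃, π̇₂ = 2c·π₂ + 2d·π₃, and π̇₃ = (2a + c)·π₃ + 2b·π₁·π₂ + d·π₁². -/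

import Mathlib

open Complex

private lemma hd_re {g : ℝ → ℂ} {g' : ℂ} {t : ℝ} (h : HasDerivAt g g' t) :
    HasDerivAt (fun s => (g s).re) g'.re t := by
  have := (Complex.reCLM.hasFDerivAt (x := g t)).comp_hasDerivAt t h
  exact this

private lemma hd_conj {g : ℝ → ℂ} {g' : ℂ} {t : ℝ} (h : HasDerivAt g g' t) :
    HasDerivAt (fun s => (starRingEnd ℂ) (g s)) ((starRingEnd ℂ) g') t := by
  have := (Complex.conjCLE.toContinuousLinearMap.hasFDerivAt (x := g t)).comp_hasDerivAt t h
  exact this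

/-- if `z₁, z₂` solve the normal-form ODEs, then the invariants
`π₁ = |z₁|²`, `π₂ = |z₂|²`, `π₃ = Re(z₁²·conj z₂)` are differentiable and solve
the orbit-space equations. -/
theorem stmt_16 (a b c d : ℝ → ℝ) (ha : Continuous a) (hb : Continuous b)
    (hc : Continuous c) (hd : Continuous d)
    (z₁ z₂ : ℝ → ℂ)
    (hz₁ : ∀ t, HasDerivAt z₁ ((a t : ℂ) * z₁ t + (b t : ℂ) * (starRingEnd ℂ) (z₁ t) * z₂ t) t)
    (hz₂ : ∀ t, HasDerivAt z₂ ((c t : ℂ) * z₂ t + (d t : ℂ) * (z₁ t)^2) t)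
    (π₁ π₂ π₃ : ℝ → ℝ)
    (hπ₁ : ∀ t, π₁ t = ‖z₁ t‖^2)
    (hπ₂ : ∀ t, π₂ t = ‖z₂ t‖^2)
    (hπ₃ : ∀ t, π₃ t = ((z₁ t)^2 * (starRingEnd ℂ) (z₂ t)).re) :
    ∀ t : ℝ,
      HasDerivAt π₁ (2 * a t * π₁ t + 2 * b t * π₃ t) t ∧
      HasDerivAt π₂ (2 * c t * π₂ t + 2 * d t * π₃ t) t ∧
      HasDerivAt π₃ ((2 * a t + c t) * π₃ t + 2 * b t * π₁ t * π₂ t + d t * (π₁ t)^2) t := by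
  intro t
  set x := z₁ t with hx
  set y := z₂ t with hy
  set x' := (a t : ℂ) * x + (b t : ℂ) * (starRingEnd ℂ) x * y with hx'
  set y' := (c t : ℂ) * y + (d t : ℂ) * x ^ 2 with hy'
  have h1 := hz₁ t
  have h2 := hz₂ t
  -- π₁
  have e1 : (fun s => π₁ s) = fun s => (z₁ s * (starRingEnd ℂ) (z₁ s)).re := by
    funext s
    rw [hπ₁ s, Complex.mul_conj]
    simp [Complex.normSq_apply, Complex.sq_norm, Complex.normSq_apply]
  have d1 : HasDerivAt π₁ ((x' * (starRingEnd ℂ) x + x * (starRingEnd ℂ) x').re) t := by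
    rw [show π₁ = fun s => π₁ s from rfl, e1]
    exact hd_re (h1.mul (hd_conj h1))
  have d2 : HasDerivAt π₂ ((y' * (starRingEnd ℂ) y + y * (starRingEnd ℂ) y').re) t := by
    have e2 : (fun s => π₂ s) = fun s => (z₂ s * (starRingEnd ℂ) (z₂ s)).re := by
      funext s
      rw [hπ₂ s, Complex.mul_conj]
      simp [Complex.sq_norm, Complex.normSq_apply]
    rw [show π₂ = fun s => π₂ s from rfl, e2]
    exact hd_re (h2.mul (hd_conj h2))
  have d3 : HasDerivAt π₃ (((2 * x * x') * (starRingEnd ℂ) y + x ^ 2 * (starRingEnd ℂ) y').re) t := by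
    have e3 : (fun s => π₃ s) = fun s => ((z₁ s) ^ 2 * (starRingEnd ℂ) (z₂ s)).re := by
      funext s; rw [hπ₃ s]
    rw [show π₃ = fun s => π₃ s from rfl, e3]
    have hsq : HasDerivAt (fun s => (z₁ s) ^ 2) (2 * x * x') t := by
      have := h1.fun_mul h1
      convert this using 1
      · rfl
      · funext s; ring
      · ring
    exact hd_re (hsq.mul (hd_conj h2))
  refine ⟨?_, ?_, ?_⟩
  · convert d1 using 1
    rw [hπ₁ t, hπ₃ t]
    simp only [hx', Complex.sq_norm, Complex.normSq_apply, ← hx, ← hy]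
    simp only [pow_two, map_add, map_mul, Complex.conj_ofReal, Complex.conj_conj,
      Complex.add_re, Complex.add_im, Complex.mul_re, Complex.mul_im,
      Complex.conj_re, Complex.conj_im, Complex.ofReal_re, Complex.ofReal_im,
      Complex.re_ofNat, Complex.im_ofNat]
    ring
  · convert d2 using 1
    rw [hπ₂ t, hπ₃ t]
    simp only [hy', Complex.sq_norm, Complex.normSq_apply, ← hx, ← hy]
    simp only [pow_two, map_add, map_mul, Complex.conj_ofReal, Complex.conj_conj,
      Complex.add_re, Complex.add_im, Complex.mul_re, Complex.mul_im,
      Complex.conj_re, Complex.conj_im, Complex.ofReal_re, Complex.ofReal_im,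
      Complex.re_ofNat, Complex.im_ofNat]
    ring
  · convert d3 using 1
    rw [hπ₁ t, hπ₂ t, hπ₃ t]
    simp only [hx', hy', Complex.sq_norm, Complex.normSq_apply, ← hx, ← hy]
    simp only [pow_two, map_add, map_mul, Complex.conj_ofReal, Complex.conj_conj,
      Complex.add_re, Complex.add_im, Complex.mul_re, Complex.mul_im,
      Complex.conj_re, Complex.conj_im, Complex.ofReal_re, Complex.ofReal_im,
      Complex.re_ofNat, Complex.im_ofNat]
    ring
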